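/- Let G be a semicomplete digraph having an (l,w)-spider with w > 0. Then G has a tame (l,w′)-spider for some w′ ≥ w. -/
import Mathlib


namespace AlmostSemicomplete

variable {V : Type} [Fintype V] [DecidableEq V]

/-- The closed out-neighborhood `N⁺[U]`. -/
def closedOut (E : V → V → Prop) [DecidableRel E] (U : Finset V) : Finset V :=
  U.biUnion fun u => insert u (Finset.univ.filter fun w => E u w)

/-- The closed in-neighborhood `N⁻[U]`. -/
def closedIn (E : V → V → Prop) [DecidableRel E] (U : Finset V) : Finset V :=
  U.biUnion fun u => insert u (Finset.univ.filter fun w => E w u)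

/-- The open out-neighborhood `N⁺(U)`. -/
def openOut (E : V → V → Prop) [DecidableRel E] (U : Finset V) : Finset V :=
  closedOut E U \ U

/-- The open in-neighborhood `N⁻(U)`. -/
def openIn (E : V → V → Prop) [DecidableRel E] (U : Finset V) : Finset V :=
  closedIn E U \ U

/-- `d⁺(U)`, the number of out-neighbors of the set `U`. -/
def dOut (E : V → V → Prop) [DecidableRel E] (U : Finset V) : ℕ := (openOut E U).card

/-- `d⁻(U)`, the number of in-neighbors of the set `U`. -/
def dIn (E : V → V → Prop) [DecidableRel E] (U : Finset V) : ℕ := (openIn E U).card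

/-- Out-neighbors of a vertex. -/
def NoutV (E : V → V → Prop) [DecidableRel E] (v : V) : Finset V :=
  Finset.univ.filter fun w => E v w

/-- In-neighbors of a vertex. -/
def NinV (E : V → V → Prop) [DecidableRel E] (v : V) : Finset V :=
  Finset.univ.filter fun w => E w v

/-- Out-degree of a vertex. -/
def dOutV (E : V → V → Prop) [DecidableRel E] (v : V) : ℕ := (NoutV E v).card

/-- In-degree of a vertex. -/
def dInV (E : V → V → Prop) [DecidableRel E] (v : V) : ℕ := (NinV E v).card

/-- A separation of a digraph: `A ∪ B = V` and no edge from `A ∖ B` to `B ∖ A`. -/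
def IsSep (E : V → V → Prop) (A B : Finset V) : Prop :=
  A ∪ B = Finset.univ ∧ ∀ a ∈ A, a ∉ B → ∀ b ∈ B, b ∉ A → ¬ E a b

/-- An `S`–`T` separation. -/
def IsSTSep (E : V → V → Prop) (S T A B : Finset V) : Prop :=
  IsSep E A B ∧ S ∩ B = ∅ ∧ T ∩ A = ∅

/-- A minimum `S`–`T` separation, i.e. one of smallest order `|A ∩ B|`. -/
def IsMinSTSep (E : V → V → Prop) (S T X Y : Finset V) : Prop :=
  IsSTSep E S T X Y ∧ ∀ A B : Finset V, IsSTSep E S T A B → (X ∩ Y).card ≤ (A ∩ B).card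

/-- A separation chain: a list of separations with the first components nondecreasing
and the second components nonincreasing. -/
def IsSepChain (E : V → V → Prop) (C : List (Finset V × Finset V)) : Prop :=
  (∀ p ∈ C, IsSep E p.1 p.2) ∧ List.Chain' (fun p q => p.1 ⊆ q.1 ∧ q.2 ⊆ p.2) C

/-- A separation chain is gapless if consecutive separations differ by at most one vertex
on at least one side. -/
def Gapless (C : List (Finset V × Finset V)) : Prop :=
  List.Chain' (fun p q => (q.1 \ p.1).card ≤ 1 ∨ (p.2 \ q.2).card ≤ 1) C

/-- A separation chain is nice if consecutive separations differ by at most one vertex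
on both sides. -/
def Nice (C : List (Finset V × Finset V)) : Prop :=
  List.Chain' (fun p q => (q.1 \ p.1).card ≤ 1 ∧ (p.2 \ q.2).card ≤ 1) C

/-- An `S`–`T` chain: a separation chain whose first separation has second component
`V ∖ S` and whose last separation has first component `V ∖ T`. -/
def IsSTChain (E : V → V → Prop) (S T : Finset V) (C : List (Finset V × Finset V)) : Prop :=
  IsSepChain E C ∧ C.head?.map Prod.snd = some (Finset.univ \ S) ∧
    C.getLast?.map Prod.fst = some (Finset.univ \ T)

/-- An `S`–`T` chain is tight if `A_0 = N⁺[S]` and `B_r = N⁻[T]`. -/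
def Tight (E : V → V → Prop) [DecidableRel E] (S T : Finset V)
    (C : List (Finset V × Finset V)) : Prop :=
  C.head?.map Prod.fst = some (closedOut E S) ∧
    C.getLast?.map Prod.snd = some (closedIn E T)

/-- The order of a separation chain: the maximum order of its member separations. -/
def chainOrder (C : List (Finset V × Finset V)) : ℕ :=
  (C.map fun p => (p.1 ∩ p.2).card).foldr max 0

/-- The chain has order at most `k`. -/
def orderLE (C : List (Finset V × Finset V)) (k : ℕ) : Prop :=
  ∀ p ∈ C, (p.1 ∩ p.2).card ≤ k

/-- A path decomposition of a digraph. -/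
def IsPathDecomp {m : ℕ} (E : V → V → Prop) (X : Fin m → Finset V) : Prop :=
  (∀ v : V, ∃ i, v ∈ X i) ∧
  (∀ u v : V, E u v → ∃ i j : Fin m, j ≤ i ∧ u ∈ X i ∧ v ∈ X j) ∧
  (∀ (v : V) (i j k : Fin m), i ≤ j → j ≤ k → v ∈ X i → v ∈ X k → v ∈ X j)

/-- The width of a path decomposition: maximum bag size minus one. -/
def pdWidth {m : ℕ} (X : Fin m → Finset V) : ℕ :=
  (Finset.univ.sup fun i => (X i).card) - 1

/-- The pathwidth of a digraph. -/
noncomputable def pathwidth (E : V → V → Prop) : ℕ :=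
  sInf {k | ∃ (m : ℕ) (X : Fin m → Finset V), IsPathDecomp E X ∧ pdWidth X = k}

/-- An `h`-semicomplete digraph: every vertex has at most `h` non-neighbors. -/
def HSemicomplete (E : V → V → Prop) [DecidableRel E] (h : ℕ) : Prop :=
  ∀ v : V, (Finset.univ.filter fun u => u ≠ v ∧ ¬ E u v ∧ ¬ E v u).card ≤ h

/-- A semicomplete digraph: between any two distinct vertices there is an edge in
at least one direction. -/
def Semicomplete (E : V → V → Prop) : Prop := ∀ u v : V, u ≠ v → E u v ∨ E v u

/-- A `k`-admissible pair `(S, T)`. -/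
def kAdmissible (E : V → V → Prop) [DecidableRel E] (k : ℕ) (S T : Finset V) : Prop :=
  closedOut E S ∩ T = ∅ ∧ dOut E S ≤ k ∧ dIn E T ≤ k

/-- The potential `μ(S,T) = 2|V ∖ (N⁺[S] ∪ N⁻[T])| + |N⁺(S) Δ N⁻(T)|`. -/
def mu (E : V → V → Prop) [DecidableRel E] (S T : Finset V) : ℕ :=
  2 * (Finset.univ \ (closedOut E S ∪ closedIn E T)).card +
    (symmDiff (openOut E S) (openIn E T)).card

/-- The wildness of a vertex. -/
def wld (E : V → V → Prop) [DecidableRel E] (v : V) : ℕ :=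
  ((Finset.univ.filter fun u => dOutV E u ≤ dOutV E v) \ NoutV E v).card

/-- A `(d, l, k)`-degree tangle. -/
def IsDegTangle (E : V → V → Prop) [DecidableRel E] (d l k : ℕ) (T : Finset V) : Prop :=
  T.card = l ∧ ∀ v ∈ T, d ≤ dOutV E v ∧ dOutV E v ≤ d + k

/-- A `(d, l, k)`-matching tangle. -/
def IsMatchTangle (E : V → V → Prop) [DecidableRel E] (d l k : ℕ)
    (T₁ T₂ : Finset V) : Prop :=
  T₁.card = l ∧ T₂.card = l ∧ (∀ v ∈ T₁, dOutV E v ≤ d) ∧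
    (∀ v ∈ T₂, d + k + 1 ≤ dOutV E v) ∧
    ∃ φ : V → V, Set.BijOn φ ↑T₁ ↑T₂ ∧ ∀ v ∈ T₁, E v (φ v)

/-- A `(d, l, w)`-spider. -/
def IsSpider (E : V → V → Prop) [DecidableRel E] (d l w : ℕ) (T : Finset V)
    (L R : V → Finset V) : Prop :=
  l ≤ T.card ∧ ∀ v ∈ T,
    L v ⊆ NinV E v ∧ 3 * l ≤ (L v).card ∧ (∀ u ∈ L v, dOutV E u ≤ d) ∧
    R v ⊆ NoutV E v ∧ 3 * l ≤ (R v).card ∧ (∀ u ∈ R v, d + w ≤ dOutV E u)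

/-- Tameness of a left-side vertex of a `(d,l,w)`-spider:
`wld(u) ≤ 3l + d + w − d⁺(u) + 2·pw(G)`, stated additively. -/
def LeftTame (E : V → V → Prop) [DecidableRel E] (d l w : ℕ) (u : V) : Prop :=
  wld E u + dOutV E u ≤ 3 * l + d + w + 2 * pathwidth E

/-- Tameness of a right-side vertex of a `(d,l,w)`-spider:
`wld(u) ≤ 3l + d⁺(u) − d + 2·pw(G)`, stated additively. -/
def RightTame (E : V → V → Prop) [DecidableRel E] (d l w : ℕ) (u : V) : Prop :=
  wld E u + d ≤ 3 * l + dOutV E u + 2 * pathwidth E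

/-- A tame `(d, l, w)`-spider: each `L_v` and each `R_v` contains at least `2l`
tame vertices. -/
def IsTameSpider (E : V → V → Prop) [DecidableRel E] (d l w : ℕ) (T : Finset V)
    (L R : V → Finset V) : Prop :=
  IsSpider E d l w T L R ∧ ∀ v ∈ T,
    (∃ L' ⊆ L v, 2 * l ≤ L'.card ∧ ∀ u ∈ L', LeftTame E d l w u) ∧
    (∃ R' ⊆ R v, 2 * l ≤ R'.card ∧ ∀ u ∈ R', RightTame E d l w u)


open Finset

lemma exists_opt_pd (E : V → V → Prop) :
    ∃ (m : ℕ) (X : Fin m → Finset V), IsPathDecomp E X ∧ pdWidth X = pathwidth E := by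
  have hpd1 : IsPathDecomp E (fun _ : Fin 1 => (Finset.univ : Finset V)) :=
    ⟨fun v => ⟨0, Finset.mem_univ v⟩,
     fun u v _ => ⟨0, 0, le_refl _, Finset.mem_univ _, Finset.mem_univ _⟩,
     fun v i j k _ _ _ _ => Finset.mem_univ v⟩
  have hne : {k | ∃ (m : ℕ) (X : Fin m → Finset V), IsPathDecomp E X ∧ pdWidth X = k}.Nonempty :=
    ⟨_, 1, _, hpd1, rfl⟩
  exact Nat.sInf_mem hne

lemma degree_counts (E : V → V → Prop) [DecidableRel E]
    (hirr : Irreflexive E) (hsc : Semicomplete E)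
    {m : ℕ} {X : Fin m → Finset V} (hpd : IsPathDecomp E X) {p : ℕ}
    (hX : ∀ i, (X i).card ≤ p + 1) :
    (∀ b : ℕ, (univ.filter fun x => dOutV E x ≤ b).card ≤ b + p + 1) ∧
    (∀ a b : ℕ, a ≤ b →
      (univ.filter fun x => a ≤ dOutV E x ∧ dOutV E x ≤ b).card + a ≤ b + 3 * p + 1) := by
  rcases isEmpty_or_nonempty V with hV | hV
  · constructor
    · intro b
      have : (univ.filter fun x => dOutV E x ≤ b) = ∅ := by
        rw [Finset.univ_eq_empty]; exact Finset.filter_empty _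
      simp [this]
    · intro a b hab
      have : (univ.filter fun x => a ≤ dOutV E x ∧ dOutV E x ≤ b) = ∅ := by
        rw [Finset.univ_eq_empty]; exact Finset.filter_empty _
      simp [this]; omega
  · obtain ⟨v₀⟩ := hV
    have hm : 0 < m := by
      obtain ⟨i, _⟩ := hpd.1 v₀; exact i.pos
    set A : ℕ → Finset V := fun t => univ.filter fun x => ∀ i : Fin m, x ∈ X i → (i : ℕ) < t
      with hA
    have hmemA : ∀ (x : V) (t : ℕ), x ∈ A t ↔ ∀ i : Fin m, x ∈ X i → (i : ℕ) < t := by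
      intro x t; rw [hA]; simp
    have hmono : ∀ {t t' : ℕ}, t ≤ t' → A t ⊆ A t' := by
      intro t t' h x hx
      exact (hmemA x t').mpr fun i hi => lt_of_lt_of_le ((hmemA x t).mp hx i hi) h
    have hAm : ∀ x : V, x ∈ A m := fun x =>
      (hmemA x m).mpr fun i _ => i.isLt
    have hA0 : ∀ x : V, x ∉ A 0 := by
      intro x hx
      obtain ⟨i, hi⟩ := hpd.1 x
      exact Nat.not_lt_zero _ ((hmemA x 0).mp hx i hi)
    have hstep : ∀ (t : ℕ) (ht : t < m), ∀ x ∈ A (t + 1), x ∈ A t ∨ x ∈ X ⟨t, ht⟩ := by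
      intro t ht x hx
      by_cases hxt : x ∈ A t
      · exact Or.inl hxt
      · right
        rw [hmemA] at hx hxt
        push_neg at hxt
        obtain ⟨i, hxi, hit⟩ := hxt
        have hieq : i = ⟨t, ht⟩ := by
          have h' := hx i hxi
          exact Fin.ext (show (i : ℕ) = t by omega)
        rwa [hieq] at hxi
    have hcardstep : ∀ (t : ℕ), t < m → (A (t + 1)).card ≤ (A t).card + p + 1 := by
      intro t ht
      have hsub : A (t + 1) ⊆ A t ∪ X ⟨t, ht⟩ := by
        intro x hx
        rcases hstep t ht x hx with h | h
        · exact mem_union_left _ h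
        · exact mem_union_right _ h
      have h1 := card_le_card hsub
      have h2 := card_union_le (A t) (X ⟨t, ht⟩)
      have h3 := hX ⟨t, ht⟩
      omega
    have hbirth : ∀ x : V, ∃ (t : ℕ) (ht : t < m), x ∈ X ⟨t, ht⟩ ∧ (A t).card ≤ dOutV E x := by
      intro x
      have hBne : (univ.filter fun i : Fin m => x ∈ X i).Nonempty := by
        obtain ⟨i, hi⟩ := hpd.1 x
        exact ⟨i, mem_filter.mpr ⟨mem_univ _, hi⟩⟩
      set i₀ := (univ.filter fun i : Fin m => x ∈ X i).min' hBne with hi₀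
      have hxi₀ : x ∈ X i₀ := (mem_filter.mp (Finset.min'_mem _ hBne)).2
      have hminb : ∀ j : Fin m, x ∈ X j → i₀ ≤ j := fun j hj =>
        Finset.min'_le _ j (mem_filter.mpr ⟨mem_univ j, hj⟩)
      have hsub : A (i₀ : ℕ) ⊆ NoutV E x := by
        intro y hy
        have hy' := (hmemA y _).mp hy
        have hyx : ¬ E y x := by
          intro hE
          obtain ⟨i, j, hji, hyi, hxj⟩ := hpd.2.1 y x hE
          have h1 : (i₀ : ℕ) ≤ (j : ℕ) := hminb j hxj
          have h2 : (i : ℕ) < (i₀ : ℕ) := hy' i hyi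
          have h3 : (j : ℕ) ≤ (i : ℕ) := hji
          omega
        have hne : y ≠ x := by
          intro h; subst h
          exact absurd (hy' i₀ hxi₀) (lt_irrefl _)
        rcases hsc y x hne with h | h
        · exact absurd h hyx
        · exact mem_filter.mpr ⟨mem_univ _, h⟩
      exact ⟨(i₀ : ℕ), i₀.isLt, by simpa using hxi₀, card_le_card hsub⟩
    have hdeath : ∀ x : V, ∃ (t : ℕ) (ht : t < m), x ∈ A (t + 1) ∧ x ∉ A t ∧
        dOutV E x + 2 ≤ (A (t + 1)).card + (X ⟨t, ht⟩).card := by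
      intro x
      have hex : ∃ t, x ∈ A t := ⟨m, hAm x⟩
      have hdx1 : 1 ≤ Nat.find hex := by
        rcases Nat.eq_zero_or_pos (Nat.find hex) with h | h
        · exact absurd (h ▸ Nat.find_spec hex) (hA0 x)
        · exact h
      have hdxm : Nat.find hex ≤ m := Nat.find_min' hex (hAm x)
      set t := Nat.find hex - 1 with htdef
      have ht : t < m := by omega
      have hxA1 : x ∈ A (t + 1) := by
        have : t + 1 = Nat.find hex := by omega
        rw [this]; exact Nat.find_spec hex
      have hxA0 : x ∉ A t := Nat.find_min hex (by omega)
      have hxX : x ∈ X ⟨t, ht⟩ := by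
        rw [hmemA] at hxA0
        push_neg at hxA0
        obtain ⟨i, hxi, hit⟩ := hxA0
        have hlt := (hmemA x (t + 1)).mp hxA1 i hxi
        have hieq : i = ⟨t, ht⟩ := Fin.ext (show (i : ℕ) = t by omega)
        rwa [hieq] at hxi
      refine ⟨t, ht, hxA1, hxA0, ?_⟩
      have hsub : NoutV E x ⊆ (A (t + 1) ∪ X ⟨t, ht⟩).erase x := by
        intro y hy
        have hExy : E x y := (mem_filter.mp hy).2
        have hyne : y ≠ x := fun h => hirr x (h ▸ hExy)
        refine Finset.mem_erase.mpr ⟨hyne, ?_⟩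
        obtain ⟨i, j, hji, hxi, hyj⟩ := hpd.2.1 x y hExy
        have hilt : (i : ℕ) < t + 1 := (hmemA x (t + 1)).mp hxA1 i hxi
        by_cases hyA : y ∈ A (t + 1)
        · exact mem_union_left _ hyA
        · refine mem_union_right _ ?_
          rw [hmemA] at hyA
          push_neg at hyA
          obtain ⟨k, hyk, hkt⟩ := hyA
          refine hpd.2.2 y j ⟨t, ht⟩ k ?_ ?_ hyj hyk
          · rw [Fin.le_def]
            have : (j : ℕ) ≤ (i : ℕ) := hji
            simpa using by omega
          · rw [Fin.le_def]
            simpa using by omega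
      have h1 : dOutV E x ≤ ((A (t + 1) ∪ X ⟨t, ht⟩).erase x).card := card_le_card hsub
      have hxmem : x ∈ A (t + 1) ∪ X ⟨t, ht⟩ := mem_union_left _ hxA1
      have h2 := Finset.card_erase_of_mem hxmem
      have h3 := Finset.card_union_add_card_inter (A (t + 1)) (X ⟨t, ht⟩)
      have h4 : 0 < ((A (t + 1)) ∩ (X ⟨t, ht⟩)).card :=
        Finset.card_pos.mpr ⟨x, Finset.mem_inter.mpr ⟨hxA1, hxX⟩⟩
      have h5 : 0 < (A (t + 1) ∪ X ⟨t, ht⟩).card := Finset.card_pos.mpr ⟨x, hxmem⟩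
      omega
    have hselect : ∀ b : ℕ, ∃ ts : ℕ, ts ≤ m ∧ (A ts).card ≤ b ∧
        (∀ k, ts < k → k ≤ m → b < (A k).card) ∧
        (∀ s : V, dOutV E s ≤ b → s ∈ A ts ∨ ∃ h : ts < m, s ∈ X ⟨ts, h⟩) := by
      intro b
      have hP0 : (A 0).card ≤ b := by
        have : A 0 = ∅ := Finset.eq_empty_of_forall_notMem hA0
        simp [this]
      set ts := Nat.findGreatest (fun t => (A t).card ≤ b) m with hts
      have hspec : (A ts).card ≤ b := by
        rw [hts]; exact Nat.findGreatest_spec (P := fun t => (A t).card ≤ b) (Nat.zero_le m) hP0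
      have htsm : ts ≤ m := by
        rw [hts]; exact Nat.findGreatest_le m
      have hgr : ∀ k, ts < k → k ≤ m → b < (A k).card := by
        intro k h1 h2
        rw [hts] at h1
        have := Nat.findGreatest_is_greatest (P := fun t => (A t).card ≤ b) h1 h2
        omega
      refine ⟨ts, htsm, hspec, hgr, ?_⟩
      intro s hs
      obtain ⟨tb, htb, hsX, hAcard⟩ := hbirth s
      have htbt : tb ≤ ts := by
        by_contra h
        have := hgr tb (by omega) (le_of_lt htb)
        omega
      by_cases hsA : s ∈ A ts
      · exact Or.inl hsA
      · right
        rw [hmemA] at hsA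
        push_neg at hsA
        obtain ⟨k, hsk, hkt⟩ := hsA
        have htsm' : ts < m := lt_of_le_of_lt hkt k.isLt
        refine ⟨htsm', ?_⟩
        refine hpd.2.2 s ⟨tb, htb⟩ ⟨ts, htsm'⟩ k ?_ ?_ hsX hsk
        · rw [Fin.le_def]; simpa using htbt
        · rw [Fin.le_def]; simpa using hkt
    have hF1 : ∀ b : ℕ, (univ.filter fun x => dOutV E x ≤ b).card ≤ b + p + 1 := by
      intro b
      obtain ⟨ts, htsm, hcard, hgr, hsel⟩ := hselect b
      rcases Nat.lt_or_ge ts m with hlt | hge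
      · have hsub : (univ.filter fun x => dOutV E x ≤ b) ⊆ A ts ∪ X ⟨ts, hlt⟩ := by
          intro x hx
          rcases hsel x (mem_filter.mp hx).2 with h | ⟨h', hXmem⟩
          · exact mem_union_left _ h
          · exact mem_union_right _ hXmem
        have h1 := card_le_card hsub
        have h2 := card_union_le (A ts) (X ⟨ts, hlt⟩)
        have h3 := hX ⟨ts, hlt⟩
        omega
      · have hsub : (univ.filter fun x => dOutV E x ≤ b) ⊆ A ts := by
          intro x hx
          rcases hsel x (mem_filter.mp hx).2 with h | ⟨h', _⟩
          · exact h
          · omega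
        have h1 := card_le_card hsub
        omega
    refine ⟨hF1, ?_⟩
    intro a b hab
    by_cases hap : a ≤ 2 * p
    · have hsub : (univ.filter fun x => a ≤ dOutV E x ∧ dOutV E x ≤ b) ⊆
          (univ.filter fun x => dOutV E x ≤ b) := by
        intro x hx
        exact mem_filter.mpr ⟨mem_univ _, (mem_filter.mp hx).2.2⟩
      have h1 := card_le_card hsub
      have h2 := hF1 b
      omega
    · -- a ≥ 2p + 1
      have hP0' : (A 0).card + p ≤ a := by
        have : A 0 = ∅ := Finset.eq_empty_of_forall_notMem hA0
        simp [this]; omega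
      set t₁ := Nat.findGreatest (fun t => (A t).card + p ≤ a) m with ht₁
      have hspec₁ : (A t₁).card + p ≤ a := by
        rw [ht₁]
        exact Nat.findGreatest_spec (P := fun t => (A t).card + p ≤ a) (Nat.zero_le m) hP0'
      have ht₁m : t₁ ≤ m := by
        rw [ht₁]; exact Nat.findGreatest_le m
      rcases eq_or_lt_of_le ht₁m with heq | hlt₁
      · -- t₁ = m : the window is empty
        have hempty : ∀ s : V, s ∉ (univ.filter fun x => a ≤ dOutV E x ∧ dOutV E x ≤ b) := by
          intro s hs
          obtain ⟨_, ha', hb'⟩ := mem_filter.mp hs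
          have h1 : Fintype.card V ≤ (A t₁).card := by
            rw [heq]
            have : (univ : Finset V) ⊆ A m := fun x _ => hAm x
            have := card_le_card this
            simpa using this
          have h2 : dOutV E s + 1 ≤ Fintype.card V := by
            have hsub : insert s (NoutV E s) ⊆ univ := fun x _ => mem_univ x
            have hnot : s ∉ NoutV E s := by
              intro h; exact hirr s (mem_filter.mp h).2
            have := card_le_card hsub
            rw [Finset.card_insert_of_notMem hnot] at this
            simpa [dOutV] using this
          omega
        have : (univ.filter fun x => a ≤ dOutV E x ∧ dOutV E x ≤ b) = ∅ :=
          Finset.eq_empty_of_forall_notMem hempty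
        simp [this]; omega
      · have hgr₁ : a + 1 ≤ (A (t₁ + 1)).card + p := by
          have := Nat.findGreatest_is_greatest (P := fun t => (A t).card + p ≤ a)
            (show t₁ < t₁ + 1 by omega) (by omega)
          omega
        have hAt₁low : a ≤ (A t₁).card + 2 * p := by
          have := hcardstep t₁ hlt₁
          omega
        obtain ⟨ts, htsm, hcard, hgr, hsel⟩ := hselect b
        have ht₁ts : t₁ ≤ ts := by
          by_contra h
          have := hgr t₁ (by omega) ht₁m
          omega
        have hkey : ∀ s ∈ (univ.filter fun x => a ≤ dOutV E x ∧ dOutV E x ≤ b),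
            s ∈ (A ts \ A t₁) ∨ ∃ h : ts < m, s ∈ X ⟨ts, h⟩ := by
          intro s hs
          obtain ⟨_, ha', hb'⟩ := mem_filter.mp hs
          rcases hsel s hb' with h | h
          · left
            refine Finset.mem_sdiff.mpr ⟨h, ?_⟩
            intro hsA1
            obtain ⟨td, htd, hdA1, hdA0, hdb⟩ := hdeath s
            have htd1 : td < t₁ := by
              by_contra h'
              exact hdA0 (hmono (by omega) hsA1)
            have h1 : (A (td + 1)).card ≤ (A t₁).card := card_le_card (hmono (by omega))
            have h2 := hX ⟨td, htd⟩
            omega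
          · exact Or.inr h
        have hsdcard : (A ts \ A t₁).card + (A t₁).card = (A ts).card := by
          rw [Finset.card_sdiff_add_card_eq_card (hmono ht₁ts)]
        rcases Nat.lt_or_ge ts m with hlt | hge
        · have hsub : (univ.filter fun x => a ≤ dOutV E x ∧ dOutV E x ≤ b) ⊆
              (A ts \ A t₁) ∪ X ⟨ts, hlt⟩ := by
            intro x hx
            rcases hkey x hx with h | ⟨h', hXmem⟩
            · exact mem_union_left _ h
            · exact mem_union_right _ hXmem
          have h1 := card_le_card hsub
          have h2 := card_union_le (A ts \ A t₁) (X ⟨ts, hlt⟩)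
          have h3 := hX ⟨ts, hlt⟩
          omega
        · have hsub : (univ.filter fun x => a ≤ dOutV E x ∧ dOutV E x ≤ b) ⊆
              (A ts \ A t₁) := by
            intro x hx
            rcases hkey x hx with h | ⟨h', _⟩
            · exact h
            · omega
          have h1 := card_le_card hsub
          omega




/-- If a semicomplete digraph has an `(l,w)`-spider with `w > 0`, then it has a tame
`(l,w′)`-spider for some `w′ ≥ w`. -/
theorem exists_tame_spider (E : V → V → Prop) [DecidableRel E]
    (hirr : Irreflexive E) (hsc : Semicomplete E)
    (d l w : ℕ) (hl : 0 < l) (hw : 0 < w)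
    (T : Finset V) (L R : V → Finset V) (hs : IsSpider E d l w T L R) :
    ∃ (d' w' : ℕ) (T' : Finset V) (L' R' : V → Finset V),
      w ≤ w' ∧ IsTameSpider E d' l w' T' L' R' := by
  classical
  obtain ⟨m, X, hpd, hwidth⟩ := exists_opt_pd E
  set p := pathwidth E with hp
  have hX : ∀ i, (X i).card ≤ p + 1 := by
    intro i
    have h1 : (X i).card ≤ univ.sup fun i => (X i).card :=
      Finset.le_sup (f := fun i => (X i).card) (mem_univ i)
    have h2 : (univ.sup fun i => (X i).card) - 1 = p := hwidth
    omega
  obtain ⟨hF1, hF2⟩ := degree_counts E hirr hsc hpd hX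
  set Ω : Set ℕ := {ω | ∃ (d₀ : ℕ) (T₀ : Finset V) (L₀ R₀ : V → Finset V),
    IsSpider E d₀ l ω T₀ L₀ R₀} with hΩ
  have hwΩ : w ∈ Ω := ⟨d, T, L, R, hs⟩
  have hbdd : BddAbove Ω := by
    refine ⟨Fintype.card V, ?_⟩
    rintro ω ⟨d₀, T₀, L₀, R₀, hsp⟩
    obtain ⟨v, hv⟩ := Finset.card_pos.mp (lt_of_lt_of_le hl hsp.1)
    obtain ⟨_, _, _, _, hRc, hRd⟩ := hsp.2 v hv
    obtain ⟨y, hy⟩ := Finset.card_pos.mp (lt_of_lt_of_le (by omega : 0 < 3 * l) hRc)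
    have h1 := hRd y hy
    have h2 : dOutV E y ≤ Fintype.card V := (Finset.card_le_univ _).trans_eq Finset.card_univ
    show ω ≤ Fintype.card V
    omega
  set w' := sSup Ω with hw'def
  obtain ⟨d₁, T₁, L₁, R₁, hsp⟩ := Nat.sSup_mem ⟨w, hwΩ⟩ hbdd
  have hmax : ∀ ω ∈ Ω, ω ≤ w' := fun ω h => le_csSup hbdd h
  have hww' : w ≤ w' := hmax w hwΩ
  have hw'1 : 1 ≤ w' := le_trans hw hww'
  -- LEFT improvement: a set of l untame left vertices yields a better spider
  have hLeft : ∀ (U : Finset V), U.card = l →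
      (∀ u ∈ U, dOutV E u ≤ d₁ ∧ ¬ LeftTame E d₁ l w' u) → False := by
    intro U hUcard hUprop
    have hspider : IsSpider E d₁ l (w' + p + 1) U
        (fun u => ((univ.filter fun x => dOutV E x ≤ dOutV E u) \ NoutV E u).erase u)
        (fun u => (NoutV E u).filter fun y => ¬ dOutV E y ≤ d₁ + w' + p) := by
      refine ⟨le_of_eq hUcard.symm, ?_⟩
      intro u hu
      obtain ⟨hud, hut⟩ := hUprop u hu
      set Wu := (univ.filter fun x => dOutV E x ≤ dOutV E u) \ NoutV E u with hWu
      have huW : u ∈ Wu := by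
        rw [hWu, Finset.mem_sdiff]
        refine ⟨mem_filter.mpr ⟨mem_univ _, le_refl _⟩, ?_⟩
        intro h
        exact hirr u (mem_filter.mp h).2
      have hWcard : Wu.card = wld E u := rfl
      have huntame : 3 * l + d₁ + w' + 2 * p + 1 ≤ wld E u + dOutV E u := by
        have hut' : ¬ (wld E u + dOutV E u ≤ 3 * l + d₁ + w' + 2 * pathwidth E) := hut
        omega
      refine ⟨?_, ?_, ?_, Finset.filter_subset _ _, ?_, ?_⟩
      · show Wu.erase u ⊆ NinV E u
        intro x hx
        obtain ⟨hxu, hxW⟩ := Finset.mem_erase.mp hx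
        obtain ⟨hxd, hxo⟩ := Finset.mem_sdiff.mp hxW
        have hnEux : ¬ E u x := fun h => hxo (mem_filter.mpr ⟨mem_univ _, h⟩)
        rcases hsc x u hxu with h | h
        · exact mem_filter.mpr ⟨mem_univ _, h⟩
        · exact absurd h hnEux
      · show 3 * l ≤ (Wu.erase u).card
        have := Finset.card_erase_of_mem huW
        have hpos : 0 < Wu.card := Finset.card_pos.mpr ⟨u, huW⟩
        omega
      · show ∀ x ∈ Wu.erase u, dOutV E x ≤ d₁
        intro x hx
        have hxW := (Finset.mem_erase.mp hx).2
        obtain ⟨hxd, hxo⟩ := Finset.mem_sdiff.mp hxW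
        have := (mem_filter.mp hxd).2
        omega
      · show 3 * l ≤ ((NoutV E u).filter fun y => ¬ dOutV E y ≤ d₁ + w' + p).card
        set c := d₁ + w' + p with hc
        have hdisj : Disjoint Wu ((NoutV E u).filter fun y => dOutV E y ≤ c) := by
          rw [Finset.disjoint_left]
          intro x hx hx'
          exact (Finset.mem_sdiff.mp hx).2 (Finset.mem_of_mem_filter x hx')
        have hsubc : Wu ∪ ((NoutV E u).filter fun y => dOutV E y ≤ c) ⊆
            univ.filter fun x => dOutV E x ≤ c := by
          intro x hx
          rcases Finset.mem_union.mp hx with h | h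
          · have := (mem_filter.mp (Finset.mem_sdiff.mp h).1).2
            exact mem_filter.mpr ⟨mem_univ _, by omega⟩
          · exact mem_filter.mpr ⟨mem_univ _, (mem_filter.mp h).2⟩
        have h1 : Wu.card + ((NoutV E u).filter fun y => dOutV E y ≤ c).card ≤ c + p + 1 := by
          rw [← Finset.card_union_of_disjoint hdisj]
          exact le_trans (card_le_card hsubc) (hF1 c)
        have h2 := Finset.card_filter_add_card_filter_not
          (s := NoutV E u) (p := fun y => dOutV E y ≤ c)
        have h3 : (NoutV E u).card = dOutV E u := rfl
        omega
      · show ∀ y ∈ (NoutV E u).filter fun y => ¬ dOutV E y ≤ d₁ + w' + p,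
            d₁ + (w' + p + 1) ≤ dOutV E y
        intro y hy
        have := (mem_filter.mp hy).2
        omega
    have := hmax (w' + p + 1) ⟨d₁, U, _, _, hspider⟩
    omega
  -- RIGHT improvement
  have hRight : ∀ (U : Finset V), U.card = l →
      (∀ u ∈ U, d₁ + w' ≤ dOutV E u ∧ ¬ RightTame E d₁ l w' u) → False := by
    intro U hUcard hUprop
    have hspider : IsSpider E (d₁ + p + 1) l (w' + 1) U
        (fun u => (((univ.filter fun x => dOutV E x ≤ dOutV E u) \ NoutV E u).erase u).filter
            fun x => dOutV E x ≤ d₁ + p + 1)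
        (fun u => (NoutV E u).filter fun y => ¬ dOutV E y ≤ dOutV E u + w' + p) := by
      refine ⟨le_of_eq hUcard.symm, ?_⟩
      intro u hu
      obtain ⟨hud, hut⟩ := hUprop u hu
      set Wu := (univ.filter fun x => dOutV E x ≤ dOutV E u) \ NoutV E u with hWu
      have huW : u ∈ Wu := by
        rw [hWu, Finset.mem_sdiff]
        refine ⟨mem_filter.mpr ⟨mem_univ _, le_refl _⟩, ?_⟩
        intro h
        exact hirr u (mem_filter.mp h).2
      have hWcard : Wu.card = wld E u := rfl
      have huntame : 3 * l + dOutV E u + 2 * p + 1 ≤ wld E u + d₁ := by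
        have hut' : ¬ (wld E u + d₁ ≤ 3 * l + dOutV E u + 2 * pathwidth E) := hut
        omega
      have herase : (Wu.erase u).card + 1 = wld E u := by
        rw [Finset.card_erase_of_mem huW, hWcard]
        have : 0 < Wu.card := Finset.card_pos.mpr ⟨u, huW⟩
        rw [hWcard] at this
        omega
      refine ⟨?_, ?_, ?_, Finset.filter_subset _ _, ?_, ?_⟩
      · show (Wu.erase u).filter (fun x => dOutV E x ≤ d₁ + p + 1) ⊆ NinV E u
        intro x hx
        have hx' := Finset.mem_of_mem_filter x hx
        obtain ⟨hxu, hxW⟩ := Finset.mem_erase.mp hx'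
        obtain ⟨hxd, hxo⟩ := Finset.mem_sdiff.mp hxW
        have hnEux : ¬ E u x := fun h => hxo (mem_filter.mpr ⟨mem_univ _, h⟩)
        rcases hsc x u hxu with h | h
        · exact mem_filter.mpr ⟨mem_univ _, h⟩
        · exact absurd h hnEux
      · show 3 * l ≤ ((Wu.erase u).filter (fun x => dOutV E x ≤ d₁ + p + 1)).card
        by_cases hcase : d₁ + p + 2 ≤ dOutV E u
        · have hpart := Finset.card_filter_add_card_filter_not
            (s := Wu.erase u) (p := fun x => dOutV E x ≤ d₁ + p + 1)
          have hsubw : (Wu.erase u).filter (fun x => ¬ dOutV E x ≤ d₁ + p + 1) ⊆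
              univ.filter fun x => d₁ + p + 2 ≤ dOutV E x ∧ dOutV E x ≤ dOutV E u := by
            intro x hx
            obtain ⟨hx1, hx2⟩ := mem_filter.mp hx
            have hxW := (Finset.mem_erase.mp hx1).2
            obtain ⟨hxd, hxo⟩ := Finset.mem_sdiff.mp hxW
            have := (mem_filter.mp hxd).2
            exact mem_filter.mpr ⟨mem_univ _, by omega, this⟩
          have hwin := hF2 (d₁ + p + 2) (dOutV E u) hcase
          have hcle := card_le_card hsubw
          omega
        · have hall : (Wu.erase u).filter (fun x => dOutV E x ≤ d₁ + p + 1) = Wu.erase u := by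
            apply Finset.filter_true_of_mem
            intro x hx
            have hxW := (Finset.mem_erase.mp hx).2
            obtain ⟨hxd, hxo⟩ := Finset.mem_sdiff.mp hxW
            have := (mem_filter.mp hxd).2
            omega
          rw [hall]
          omega
      · show ∀ x ∈ (Wu.erase u).filter (fun x => dOutV E x ≤ d₁ + p + 1),
            dOutV E x ≤ d₁ + p + 1
        intro x hx
        exact (mem_filter.mp hx).2
      · show 3 * l ≤ ((NoutV E u).filter fun y => ¬ dOutV E y ≤ dOutV E u + w' + p).card
        set c := dOutV E u + w' + p with hc
        have hdisj : Disjoint Wu ((NoutV E u).filter fun y => dOutV E y ≤ c) := by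
          rw [Finset.disjoint_left]
          intro x hx hx'
          exact (Finset.mem_sdiff.mp hx).2 (Finset.mem_of_mem_filter x hx')
        have hsubc : Wu ∪ ((NoutV E u).filter fun y => dOutV E y ≤ c) ⊆
            univ.filter fun x => dOutV E x ≤ c := by
          intro x hx
          rcases Finset.mem_union.mp hx with h | h
          · have := (mem_filter.mp (Finset.mem_sdiff.mp h).1).2
            exact mem_filter.mpr ⟨mem_univ _, by omega⟩
          · exact mem_filter.mpr ⟨mem_univ _, (mem_filter.mp h).2⟩
        have h1 : Wu.card + ((NoutV E u).filter fun y => dOutV E y ≤ c).card ≤ c + p + 1 := by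
          rw [← Finset.card_union_of_disjoint hdisj]
          exact le_trans (card_le_card hsubc) (hF1 c)
        have h2 := Finset.card_filter_add_card_filter_not
          (s := NoutV E u) (p := fun y => dOutV E y ≤ c)
        have h3 : (NoutV E u).card = dOutV E u := rfl
        omega
      · show ∀ y ∈ (NoutV E u).filter fun y => ¬ dOutV E y ≤ dOutV E u + w' + p,
            (d₁ + p + 1) + (w' + 1) ≤ dOutV E y
        intro y hy
        have := (mem_filter.mp hy).2
        omega
    have := hmax (w' + 1) ⟨d₁ + p + 1, U, _, _, hspider⟩
    omega
  -- assemble the tame spider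
  refine ⟨d₁, w', T₁, L₁, R₁, hww', hsp, ?_⟩
  intro v hv
  obtain ⟨hLsub, hLcard, hLdeg, hRsub, hRcard, hRdeg⟩ := hsp.2 v hv
  constructor
  · have hcnt : ((L₁ v).filter fun u => ¬ LeftTame E d₁ l w' u).card ≤ l := by
      by_contra hcon
      push_neg at hcon
      obtain ⟨U, hUsub, hUcard⟩ := Finset.exists_subset_card_eq (le_of_lt hcon)
      refine hLeft U hUcard ?_
      intro u hu
      have hu' := hUsub hu
      obtain ⟨huL, hunt⟩ := mem_filter.mp hu'
      exact ⟨hLdeg u huL, hunt⟩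
    refine ⟨(L₁ v).filter fun u => LeftTame E d₁ l w' u, Finset.filter_subset _ _, ?_, ?_⟩
    · have := Finset.card_filter_add_card_filter_not
        (s := L₁ v) (p := fun u => LeftTame E d₁ l w' u)
      omega
    · intro u hu
      exact (mem_filter.mp hu).2
  · have hcnt : ((R₁ v).filter fun u => ¬ RightTame E d₁ l w' u).card ≤ l := by
      by_contra hcon
      push_neg at hcon
      obtain ⟨U, hUsub, hUcard⟩ := Finset.exists_subset_card_eq (le_of_lt hcon)
      refine hRight U hUcard ?_
      intro u hu
      have hu' := hUsub hu
      obtain ⟨huR, hunt⟩ := mem_filter.mp hu'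
      exact ⟨hRdeg u huR, hunt⟩
    refine ⟨(R₁ v).filter fun u => RightTame E d₁ l w' u, Finset.filter_subset _ _, ?_, ?_⟩
    · have := Finset.card_filter_add_card_filter_not
        (s := R₁ v) (p := fun u => RightTame E d₁ l w' u)
      omega
    · intro u hu
      exact (mem_filter.mp hu).2

end AlmostSemicomplete
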